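/- arXiv:2410.21606 — 2 statements merged into one kernel-verified Lean document; each statement's English description precedes it below -/
import Mathlib

section
/- Let H₀ and H₁ be complex Hilbert spaces. Let (ιᵢ) be a net (indexed by a filter l) of isometric continuous linear maps H₀ → H₁ and ι an isometric continuous linear map H₀ → H₁ such that ιᵢ x → ι x for every x ∈ H₀ and adjoint(ιᵢ) y → adjoint(ι) y for every y ∈ H₁ (convergence in norm along l). Let (Tᵢ) be a net of continuous linear operators on H₀ converging in operator norm to a compact operator T on H₀. Then ‖ιᵢ ∘ Tᵢ ∘ adjoint(ιᵢ) − ι ∘ T ∘ adjoint(ι)‖ → 0 along l. In particular, the map sending an isometry ι to the conjugation operator Ad(ι) : T ↦ ι T ι* is continuous from the strong-* topology on isometries to the point-norm topology on maps between compact operators. -/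
set_option maxHeartbeats 1000000

open Filter ContinuousLinearMap Metric


/-- Key lemma: a uniformly bounded net of operators converging pointwise to zero,
composed with a fixed compact operator, converges to zero in operator norm. -/
lemma aux_tendsto_norm_comp_compact
    {H₀ H₁ : Type*} [NormedAddCommGroup H₀] [InnerProductSpace ℂ H₀]
    [NormedAddCommGroup H₁] [InnerProductSpace ℂ H₁]
    {I : Type*} {l : Filter I} (S : I → (H₀ →L[ℂ] H₁)) (C : ℝ)
    (hC : ∀ i, ‖S i‖ ≤ C)
    (hpt : ∀ x : H₀, Tendsto (fun i => S i x) l (nhds 0))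
    (K : H₀ →L[ℂ] H₀) (hK : IsCompactOperator K) :
    Tendsto (fun i => ‖(S i).comp K‖) l (nhds 0) := by
  have hK' : IsCompactOperator (K : H₀ →ₗ[ℂ] H₀) := hK
  obtain ⟨M, hMc, hMsub⟩ := hK'.image_closedBall_subset_compact (𝕜₁ := ℂ) 1
  rw [NormedAddCommGroup.tendsto_nhds_zero]
  intro ε hε
  have hD : (0:ℝ) ≤ max C 0 := le_max_right _ _
  set D := max C 0 with hDdef
  have hδ : (0:ℝ) < ε / (2 * (D + 1)) := by positivity
  set δ := ε / (2 * (D + 1)) with hδdef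
  obtain ⟨t, htfin, htsub⟩ := Metric.totallyBounded_iff.mp hMc.totallyBounded δ hδ
  have hev : ∀ᶠ i in l, ∀ y ∈ t, ‖S i y‖ < ε / 2 := by
    rw [eventually_all_finite htfin]
    intro y _
    exact (NormedAddCommGroup.tendsto_nhds_zero.mp (hpt y)) (ε / 2) (by positivity)
  filter_upwards [hev] with i hi
  have hc : (0:ℝ) ≤ D * δ + ε / 2 := by positivity
  have hball : ∀ u : H₀, ‖u‖ ≤ 1 → ‖S i (K u)‖ ≤ D * δ + ε / 2 := by
    intro u hu
    have hKu : K u ∈ M := hMsub ⟨u, by simpa [Metric.mem_closedBall] using hu, rfl⟩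
    obtain ⟨y, hyt, hy⟩ := Set.mem_iUnion₂.mp (htsub hKu)
    have hdist : ‖K u - y‖ < δ := by rwa [← dist_eq_norm, ← Metric.mem_ball]
    calc ‖S i (K u)‖ = ‖S i (K u - y) + S i y‖ := by rw [map_sub, sub_add_cancel]
      _ ≤ ‖S i (K u - y)‖ + ‖S i y‖ := norm_add_le _ _
      _ ≤ D * δ + ε / 2 := by
          refine add_le_add ?_ (hi y hyt).le
          calc ‖S i (K u - y)‖ ≤ ‖S i‖ * ‖K u - y‖ := (S i).le_opNorm _
            _ ≤ D * δ :=
              mul_le_mul ((hC i).trans (le_max_left _ _)) hdist.le (norm_nonneg _) hD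
  have hnorm : ‖(S i).comp K‖ ≤ D * δ + ε / 2 := by
    refine ContinuousLinearMap.opNorm_le_bound _ hc ?_
    intro x
    rcases eq_or_ne x 0 with rfl | hx
    · simp [hc]
    · have hxn : ‖x‖ ≠ 0 := norm_ne_zero_iff.mpr hx
      set u := ‖x‖⁻¹ • x with hu
      have hunorm : ‖u‖ = 1 := norm_smul_inv_norm hx
      have hxu : x = ‖x‖ • u := by
        rw [hu, smul_smul, mul_inv_cancel₀ hxn, one_smul]
      have : K x = ‖x‖ • K u := by
        conv_lhs => rw [hxu]
        rw [map_smul_of_tower]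
      rw [comp_apply, this, map_smul_of_tower, norm_smul, Real.norm_eq_abs,
        abs_of_nonneg (norm_nonneg x), mul_comm]
      exact mul_le_mul_of_nonneg_right (hball u hunorm.le) (norm_nonneg x)
  have hlt : D * δ + ε / 2 < ε := by
    have : D * δ < (D + 1) * δ := by
      apply mul_lt_mul_of_pos_right (by linarith) hδ
    have h2 : (D + 1) * δ = ε / 2 := by
      field_simp [hδdef]
      have hD1 : D + 1 ≠ 0 := by positivity
      rw [hδdef]; field_simp
    linarith
  calc ‖‖(S i).comp K‖‖ = ‖(S i).comp K‖ := by
        rw [Real.norm_eq_abs, abs_of_nonneg (norm_nonneg _)]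
    _ ≤ D * δ + ε / 2 := hnorm
    _ < ε := hlt


/-- The adjoint of a compact operator on a Hilbert space is compact. -/
lemma aux_adjoint_isCompactOperator
    {H₀ : Type*} [NormedAddCommGroup H₀] [InnerProductSpace ℂ H₀] [CompleteSpace H₀]
    {T : H₀ →L[ℂ] H₀} (hT : IsCompactOperator T) :
    IsCompactOperator (adjoint T : H₀ →L[ℂ] H₀) := by
  show IsCompactOperator ⇑((adjoint T : H₀ →L[ℂ] H₀) : H₀ →ₗ[ℂ] H₀)
  rw [isCompactOperator_iff_isCompact_closure_image_closedBall
    ((adjoint T : H₀ →L[ℂ] H₀) : H₀ →ₗ[ℂ] H₀) one_pos]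
  have hTB : TotallyBounded ((adjoint T) '' closedBall 0 1) := by
    rw [Metric.totallyBounded_iff]
    intro ε hε
    set A : H₀ →L[ℂ] H₀ := T.comp (adjoint T) with hA
    have hAc : IsCompactOperator A := by
      have := hT.comp_clm (adjoint T)
      simpa [hA, ContinuousLinearMap.coe_comp'] using this
    have hAc' : IsCompactOperator (A : H₀ →ₗ[ℂ] H₀) := hAc
    obtain ⟨M, hMc, hMsub⟩ := hAc'.image_closedBall_subset_compact (𝕜₁ := ℂ) 1
    have hAtb : TotallyBounded (A '' closedBall 0 1) :=
      hMc.totallyBounded.subset hMsub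
    set δ := ε ^ 2 / 4 with hδdef
    have hδpos : (0:ℝ) < δ := by positivity
    obtain ⟨t, hts, htfin, htsub⟩ := totallyBounded_iff_subset.mp hAtb
      {p : H₀ × H₀ | dist p.1 p.2 < δ} (Metric.dist_mem_uniformity hδpos)
    -- each element of t is of the form A z with z in the closed ball
    choose z hz hzA using fun (y : t) => (hts y.2 : (y : H₀) ∈ A '' closedBall 0 1)
    have : Finite ↥t := htfin.to_subtype
    refine ⟨(fun y : t => adjoint T (z y)) '' Set.univ, (Set.finite_univ.image _), ?_⟩
    rintro - ⟨x, hx, rfl⟩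
    have hxmem : A x ∈ ⋃ y ∈ t, {p | (p, y) ∈ {p : H₀ × H₀ | dist p.1 p.2 < δ}} :=
      htsub ⟨x, hx, rfl⟩
    obtain ⟨y, hyt, hy⟩ := Set.mem_iUnion₂.mp hxmem
    have hy' : dist (A x) y < δ := hy
    set yy : t := ⟨y, hyt⟩
    refine Set.mem_iUnion₂.mpr ⟨adjoint T (z yy), ⟨yy, Set.mem_univ _, rfl⟩, ?_⟩
    -- key estimate: ‖T* x - T* z‖² ≤ ‖A x - A z‖ * ‖x - z‖
    have hxz : ‖x - z yy‖ ≤ 2 := by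
      have h1 : ‖x‖ ≤ 1 := mem_closedBall_zero_iff.mp hx
      have h2 : ‖z yy‖ ≤ 1 := mem_closedBall_zero_iff.mp (hz yy)
      calc ‖x - z yy‖ ≤ ‖x‖ + ‖z yy‖ := norm_sub_le _ _
        _ ≤ 2 := by linarith
    have hAxz : ‖A x - A (z yy)‖ < δ := by
      have : A (z yy) = y := hzA yy
      rw [this, ← dist_eq_norm]
      exact hy'
    have key : ‖adjoint T x - adjoint T (z yy)‖ ^ 2 ≤ ‖A x - A (z yy)‖ * ‖x - z yy‖ := by
      set v := x - z yy with hv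
      have h1 : adjoint T x - adjoint T (z yy) = adjoint T v := (map_sub _ _ _).symm
      have h2 : A x - A (z yy) = A v := (map_sub _ _ _).symm
      rw [h1, h2]
      have h3 : (‖adjoint T v‖ : ℝ) ^ 2
          = RCLike.re (inner ℂ (adjoint T v) (adjoint T v)) :=
        (inner_self_eq_norm_sq _).symm
      rw [h3]
      have h4 : inner ℂ (adjoint T v) (adjoint T v) = inner ℂ v (A v) := by
        rw [adjoint_inner_left]
        rfl
      rw [h4]
      calc RCLike.re (inner ℂ v (A v)) ≤ ‖inner ℂ v (A v)‖ :=
            RCLike.re_le_norm _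
        _ ≤ ‖v‖ * ‖A v‖ := norm_inner_le_norm _ _
        _ = ‖A v‖ * ‖v‖ := mul_comm _ _
    have hlt : ‖adjoint T x - adjoint T (z yy)‖ ^ 2 < ε ^ 2 := by
      calc ‖adjoint T x - adjoint T (z yy)‖ ^ 2 ≤ ‖A x - A (z yy)‖ * ‖x - z yy‖ := key
        _ ≤ ‖A x - A (z yy)‖ * 2 :=
            mul_le_mul_of_nonneg_left hxz (norm_nonneg _)
        _ < δ * 2 := by
            apply mul_lt_mul_of_pos_right hAxz two_pos
        _ < ε ^ 2 := by rw [hδdef]; nlinarith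
    have : ‖adjoint T x - adjoint T (z yy)‖ < ε :=
      lt_of_pow_lt_pow_left₀ 2 hε.le hlt
    rwa [Metric.mem_ball, dist_eq_norm]
  exact TotallyBounded.isCompact_of_isClosed hTB.closure isClosed_closure

/-- If a net of isometric continuous linear maps `ι i : H₀ → H₁` converges
strong-* (i.e. pointwise in norm, together with the adjoints) to an isometric `ι₀`, and a net
of operators `T i` on `H₀` converges in operator norm to a compact operator `T₀`, then
`ι i ∘ T i ∘ (ι i)* → ι₀ ∘ T₀ ∘ ι₀*` in operator norm.  In particular `Ad` is continuous from
the strong-* topology on isometries to the point-norm topology on compact operators. -/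
theorem tendsto_conj_of_strongStar_tendsto
    {H₀ H₁ : Type*} [NormedAddCommGroup H₀] [InnerProductSpace ℂ H₀] [CompleteSpace H₀]
    [NormedAddCommGroup H₁] [InnerProductSpace ℂ H₁] [CompleteSpace H₁]
    {I : Type*} (l : Filter I)
    (ι : I → (H₀ →L[ℂ] H₁)) (ι₀ : H₀ →L[ℂ] H₁)
    (hisom : ∀ i, ∀ x : H₀, ‖ι i x‖ = ‖x‖) (hisom₀ : ∀ x : H₀, ‖ι₀ x‖ = ‖x‖)
    (hfwd : ∀ x : H₀, Tendsto (fun i => ι i x) l (nhds (ι₀ x)))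
    (hadj : ∀ y : H₁, Tendsto (fun i => adjoint (ι i) y) l (nhds (adjoint ι₀ y)))
    (T : I → (H₀ →L[ℂ] H₀)) (T₀ : H₀ →L[ℂ] H₀) (hT₀ : IsCompactOperator T₀)
    (hT : Tendsto T l (nhds T₀)) :
    Tendsto (fun i => ‖(ι i).comp ((T i).comp (adjoint (ι i))) -
      ι₀.comp (T₀.comp (adjoint ι₀))‖) l (nhds 0) := by
  -- norm bounds for the isometries and their adjoints
  have hι : ∀ i, ‖ι i‖ ≤ 1 := fun i =>
    opNorm_le_bound _ zero_le_one (fun x => by rw [hisom i x, one_mul])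
  have hι₀ : ‖ι₀‖ ≤ 1 :=
    opNorm_le_bound _ zero_le_one (fun x => by rw [hisom₀ x, one_mul])
  have hadjnorm : ∀ A : H₀ →L[ℂ] H₁, ‖adjoint A‖ = ‖A‖ := fun A =>
    (ContinuousLinearMap.adjoint (𝕜 := ℂ) (E := H₀) (F := H₁)).norm_map A
  have hιa : ∀ i, ‖adjoint (ι i)‖ ≤ 1 := fun i => by rw [hadjnorm]; exact hι i
  have hι₀a : ‖adjoint ι₀‖ ≤ 1 := by rw [hadjnorm]; exact hι₀
  -- pointwise convergence of the difference net to 0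
  have hpt : ∀ x : H₀, Tendsto (fun i => (ι i - ι₀) x) l (nhds 0) := by
    intro x
    simp only [ContinuousLinearMap.sub_apply]
    exact tendsto_sub_nhds_zero_iff.mpr (hfwd x)
  have hbd : ∀ i, ‖ι i - ι₀‖ ≤ 2 := fun i =>
    (norm_sub_le _ _).trans (by linarith [hι i, hι₀])
  -- the three convergent pieces
  have h1 : Tendsto (fun i => ‖T i - T₀‖) l (nhds 0) :=
    tendsto_iff_norm_sub_tendsto_zero.mp hT
  have h2 : Tendsto (fun i => ‖(ι i - ι₀).comp T₀‖) l (nhds 0) :=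
    aux_tendsto_norm_comp_compact (fun i => ι i - ι₀) 2 hbd hpt T₀ hT₀
  have h3 : Tendsto (fun i => ‖(ι i - ι₀).comp (adjoint T₀)‖) l (nhds 0) :=
    aux_tendsto_norm_comp_compact (fun i => ι i - ι₀) 2 hbd hpt (adjoint T₀)
      (aux_adjoint_isCompactOperator hT₀)
  -- squeeze
  have hsum : Tendsto (fun i => ‖T i - T₀‖ + ‖(ι i - ι₀).comp T₀‖ +
      ‖(ι i - ι₀).comp (adjoint T₀)‖) l (nhds 0) := by
    have := (h1.add h2).add h3
    simpa using this
  refine squeeze_zero (fun i => norm_nonneg _) ?_ hsum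
  intro i
  -- algebraic decomposition
  have hdecomp : (ι i).comp ((T i).comp (adjoint (ι i))) - ι₀.comp (T₀.comp (adjoint ι₀))
      = (ι i).comp ((T i - T₀).comp (adjoint (ι i)))
        + ((ι i - ι₀).comp T₀).comp (adjoint (ι i))
        + ι₀.comp (T₀.comp (adjoint (ι i) - adjoint ι₀)) := by
    ext x
    simp only [ContinuousLinearMap.comp_apply, ContinuousLinearMap.sub_apply,
      ContinuousLinearMap.add_apply, map_sub]
    abel
  rw [hdecomp]
  have e1 : ‖(ι i).comp ((T i - T₀).comp (adjoint (ι i)))‖ ≤ ‖T i - T₀‖ := by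
    calc ‖(ι i).comp ((T i - T₀).comp (adjoint (ι i)))‖
        ≤ ‖ι i‖ * ‖(T i - T₀).comp (adjoint (ι i))‖ := opNorm_comp_le _ _
      _ ≤ ‖ι i‖ * (‖T i - T₀‖ * ‖adjoint (ι i)‖) := by
          gcongr
          exact opNorm_comp_le _ _
      _ ≤ 1 * (‖T i - T₀‖ * 1) := by
          apply mul_le_mul (hι i) _ (by positivity) zero_le_one
          exact mul_le_mul_of_nonneg_left (hιa i) (norm_nonneg _)
      _ = ‖T i - T₀‖ := by ring
  have e2 : ‖((ι i - ι₀).comp T₀).comp (adjoint (ι i))‖ ≤ ‖(ι i - ι₀).comp T₀‖ := by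
    calc ‖((ι i - ι₀).comp T₀).comp (adjoint (ι i))‖
        ≤ ‖(ι i - ι₀).comp T₀‖ * ‖adjoint (ι i)‖ := opNorm_comp_le _ _
      _ ≤ ‖(ι i - ι₀).comp T₀‖ * 1 :=
          mul_le_mul_of_nonneg_left (hιa i) (norm_nonneg _)
      _ = ‖(ι i - ι₀).comp T₀‖ := mul_one _
  have e3 : ‖ι₀.comp (T₀.comp (adjoint (ι i) - adjoint ι₀))‖
      ≤ ‖(ι i - ι₀).comp (adjoint T₀)‖ := by
    have hkey : ‖T₀.comp (adjoint (ι i) - adjoint ι₀)‖ = ‖(ι i - ι₀).comp (adjoint T₀)‖ := by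
      have : adjoint ((ι i - ι₀).comp (adjoint T₀)) = T₀.comp (adjoint (ι i) - adjoint ι₀) := by
        rw [adjoint_comp, adjoint_adjoint, map_sub]
      calc ‖T₀.comp (adjoint (ι i) - adjoint ι₀)‖
          = ‖adjoint ((ι i - ι₀).comp (adjoint T₀))‖ := by rw [this]
        _ = ‖(ι i - ι₀).comp (adjoint T₀)‖ :=
            (ContinuousLinearMap.adjoint (𝕜 := ℂ) (E := H₀) (F := H₁)).norm_map _
    calc ‖ι₀.comp (T₀.comp (adjoint (ι i) - adjoint ι₀))‖
        ≤ ‖ι₀‖ * ‖T₀.comp (adjoint (ι i) - adjoint ι₀)‖ := opNorm_comp_le _ _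
      _ ≤ 1 * ‖T₀.comp (adjoint (ι i) - adjoint ι₀)‖ :=
          mul_le_mul_of_nonneg_right hι₀ (norm_nonneg _)
      _ = ‖(ι i - ι₀).comp (adjoint T₀)‖ := by rw [one_mul, hkey]
  calc ‖(ι i).comp ((T i - T₀).comp (adjoint (ι i)))
        + ((ι i - ι₀).comp T₀).comp (adjoint (ι i))
        + ι₀.comp (T₀.comp (adjoint (ι i) - adjoint ι₀))‖
      ≤ ‖(ι i).comp ((T i - T₀).comp (adjoint (ι i)))
          + ((ι i - ι₀).comp T₀).comp (adjoint (ι i))‖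
        + ‖ι₀.comp (T₀.comp (adjoint (ι i) - adjoint ι₀))‖ := norm_add_le _ _
    _ ≤ ‖(ι i).comp ((T i - T₀).comp (adjoint (ι i)))‖
        + ‖((ι i - ι₀).comp T₀).comp (adjoint (ι i))‖
        + ‖ι₀.comp (T₀.comp (adjoint (ι i) - adjoint ι₀))‖ := by
          gcongr
          exact norm_add_le _ _
    _ ≤ ‖T i - T₀‖ + ‖(ι i - ι₀).comp T₀‖ + ‖(ι i - ι₀).comp (adjoint T₀)‖ := by
          gcongr
end

section
/- For f : ℝ → ℝ define (R f)(x) = x·f(x) − f′(x); let f₀(x) = exp(−x²/2) and fₙ = Rⁿf₀ (the n-fold iterate of R applied to f₀). Then the functions fₙ are pairwise orthogonal in L²(ℝ): for all m ≠ n, ∫_ℝ fₘ(x)·fₙ(x) dx = 0 (integral with respect to Lebesgue measure). -/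
open MeasureTheory

/-- The raising operator `(R f)(x) = x · f(x) − f′(x)`. -/
noncomputable def raiseOp (f : ℝ → ℝ) : ℝ → ℝ := fun x => x * f x - deriv f x

/-- The Gaussian ground state `f₀(x) = exp(−x²/2)`. -/
noncomputable def gauss : ℝ → ℝ := fun x => Real.exp (-x ^ 2 / 2)

open Polynomial Filter Topology Asymptotics

/-- The (physicists') Hermite-type polynomials associated to the raising operator. -/
noncomputable def hpoly : ℕ → Polynomial ℝ
  | 0 => 1
  | n + 1 => C 2 * X * hpoly n - derivative (hpoly n)

lemma gauss_hasDerivAt (x : ℝ) : HasDerivAt gauss (-x * gauss x) x := by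
  have h : HasDerivAt (fun x : ℝ => -x ^ 2 / 2) (-x) x := by
    have h2 := (hasDerivAt_pow 2 x).neg.div_const 2
    simp at h2
    rwa [show (-(2 * x) / 2 : ℝ) = -x by ring] at h2
  have := h.exp
  unfold gauss
  simpa [gauss, mul_comm] using this

lemma poly_gauss_hasDerivAt (Q : Polynomial ℝ) (x : ℝ) :
    HasDerivAt (fun x => Q.eval x * gauss x)
      ((derivative Q).eval x * gauss x + Q.eval x * (-x * gauss x)) x :=
  (Q.hasDerivAt x).mul (gauss_hasDerivAt x)

lemma iterate_raiseOp_eq (n : ℕ) :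
    raiseOp^[n] gauss = fun x => (hpoly n).eval x * gauss x := by
  induction n with
  | zero => funext x; simp [hpoly]
  | succ n ih =>
    rw [Function.iterate_succ_apply', ih]
    funext x
    have hd := (poly_gauss_hasDerivAt (hpoly n) x).deriv
    simp only [raiseOp, hd, hpoly, eval_sub, eval_mul, eval_C, eval_X]
    ring

lemma hasDerivAt_poly_exp (Q : Polynomial ℝ) (x : ℝ) :
    HasDerivAt (fun x => Q.eval x * Real.exp (-x ^ 2))
      ((derivative Q - C 2 * X * Q).eval x * Real.exp (-x ^ 2)) x := by
  have he : HasDerivAt (fun x : ℝ => Real.exp (-x ^ 2)) (-(2 * x) * Real.exp (-x ^ 2)) x := by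
    have h : HasDerivAt (fun x : ℝ => -x ^ 2) (-(2 * x)) x := by
      have := (hasDerivAt_pow 2 x).fun_neg
      simpa using this
    simpa [mul_comm] using h.exp
  have := (Q.hasDerivAt x).fun_mul he
  refine this.congr_deriv ?_
  simp only [eval_sub, eval_mul, eval_C, eval_X]
  ring

lemma tendsto_monomial_gauss (n : ℕ) :
    Tendsto (fun x : ℝ => x ^ n * Real.exp (-x ^ 2 / 2)) atTop (𝓝 0) := by
  apply squeeze_zero_norm' ?_ (Real.tendsto_pow_mul_exp_neg_atTop_nhds_zero n)
  filter_upwards [eventually_ge_atTop (2 : ℝ)] with x hx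
  have hx0 : (0 : ℝ) ≤ x := by linarith
  rw [Real.norm_eq_abs, abs_mul, abs_of_nonneg (pow_nonneg hx0 n),
    abs_of_nonneg (Real.exp_pos _).le]
  have : Real.exp (-x ^ 2 / 2) ≤ Real.exp (-x) := by
    apply Real.exp_le_exp.mpr; nlinarith
  exact mul_le_mul_of_nonneg_left this (pow_nonneg hx0 n)

lemma tendsto_poly_gauss_atTop (Q : Polynomial ℝ) :
    Tendsto (fun x : ℝ => Q.eval x * Real.exp (-x ^ 2 / 2)) atTop (𝓝 0) := by
  induction Q using Polynomial.induction_on' with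
  | add p q hp hq => simpa [add_mul] using hp.add hq
  | monomial n c =>
    simpa [eval_monomial, mul_assoc] using (tendsto_monomial_gauss n).const_mul c

lemma tendsto_poly_gauss_atBot (Q : Polynomial ℝ) :
    Tendsto (fun x : ℝ => Q.eval x * Real.exp (-x ^ 2 / 2)) atBot (𝓝 0) := by
  have h := (tendsto_poly_gauss_atTop (Q.comp (-X))).comp tendsto_neg_atBot_atTop
  convert h using 1
  funext x
  simp only [Function.comp_apply, eval_comp, eval_neg, eval_X]
  ring_nf

lemma integrable_poly_gauss (Q : Polynomial ℝ) :
    Integrable (fun x : ℝ => Q.eval x * Real.exp (-x ^ 2)) := by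
  have hc : Continuous fun x : ℝ => Q.eval x * Real.exp (-x ^ 2) := by
    exact (Q.continuous_aeval).mul (Real.continuous_exp.comp (by continuity))
  have hint : Integrable (fun x : ℝ => Real.exp (-x ^ 2 / 2)) := by
    have h := integrable_exp_neg_mul_sq (show (0 : ℝ) < 1 / 2 by norm_num)
    have he : (fun x : ℝ => Real.exp (-x ^ 2 / 2)) = fun x : ℝ => Real.exp (-(1 / 2) * x ^ 2) := by
      funext x; ring_nf
    rw [he]; exact h
  have key : ∀ l : Filter ℝ, Tendsto (fun x : ℝ => Q.eval x * Real.exp (-x ^ 2 / 2)) l (𝓝 0) →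
      (fun x : ℝ => Q.eval x * Real.exp (-x ^ 2)) =O[l] fun x : ℝ => Real.exp (-x ^ 2 / 2) := by
    intro l hl
    have h1 : (fun x : ℝ => Q.eval x * Real.exp (-x ^ 2)) =
        fun x : ℝ => (Q.eval x * Real.exp (-x ^ 2 / 2)) * Real.exp (-x ^ 2 / 2) := by
      funext x
      rw [mul_assoc, ← Real.exp_add]
      ring_nf
    rw [h1]
    have h2 := (hl.isBigO_one ℝ).mul (isBigO_refl (fun x : ℝ => Real.exp (-x ^ 2 / 2)) l)
    simpa using h2
  exact hc.locallyIntegrable.integrable_of_isBigO_atBot_atTop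
    (key _ (tendsto_poly_gauss_atBot Q)) (hint.integrableAtFilter _)
    (key _ (tendsto_poly_gauss_atTop Q)) (hint.integrableAtFilter _)

lemma integral_deriv_poly_gauss (Q : Polynomial ℝ) :
    ∫ x : ℝ, (derivative Q - C 2 * X * Q).eval x * Real.exp (-x ^ 2) = 0 :=
  integral_eq_zero_of_hasDerivAt_of_integrable (fun x => hasDerivAt_poly_exp Q x)
    (integrable_poly_gauss _) (integrable_poly_gauss Q)

lemma ibp_step (A B : Polynomial ℝ) :
    ∫ x : ℝ, A.eval x * (C 2 * X * B - derivative B).eval x * Real.exp (-x ^ 2)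
      = ∫ x : ℝ, (derivative A).eval x * B.eval x * Real.exp (-x ^ 2) := by
  have heq : (fun x : ℝ => A.eval x * (C 2 * X * B - derivative B).eval x * Real.exp (-x ^ 2))
      = fun x : ℝ => (derivative A * B).eval x * Real.exp (-x ^ 2)
        - (derivative (A * B) - C 2 * X * (A * B)).eval x * Real.exp (-x ^ 2) := by
    funext x
    simp only [derivative_mul, eval_sub, eval_add, eval_mul, eval_C, eval_X]
    ring
  rw [heq, integral_sub (integrable_poly_gauss _) (integrable_poly_gauss _),
    integral_deriv_poly_gauss, sub_zero]
  congr 1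
  funext x
  simp [eval_mul]

lemma hpoly_natDegree (n : ℕ) : (hpoly n).natDegree ≤ n := by
  induction n with
  | zero => simp [hpoly]
  | succ n ih =>
    refine le_trans (natDegree_sub_le _ _) (max_le ?_ ?_)
    · refine le_trans (natDegree_mul_le) ?_
      have h1 : (C (2:ℝ) * X).natDegree ≤ 1 := by
        refine le_trans (natDegree_mul_le) ?_
        simp
      omega
    · have := natDegree_derivative_le (hpoly n)
      omega

lemma ortho_aux : ∀ n : ℕ, ∀ Q : Polynomial ℝ, Q.natDegree < n →
    ∫ x : ℝ, Q.eval x * (hpoly n).eval x * Real.exp (-x ^ 2) = 0 := by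
  intro n
  induction n with
  | zero => intro Q hQ; omega
  | succ n ih =>
    intro Q hQ
    have : (hpoly (n + 1)) = C 2 * X * hpoly n - derivative (hpoly n) := rfl
    rw [this, ibp_step Q (hpoly n)]
    by_cases h0 : Q.natDegree = 0
    · obtain ⟨a, rfl⟩ := Polynomial.natDegree_eq_zero.mp h0
      simp
    · exact ih (derivative Q) (by have := Polynomial.natDegree_derivative_lt h0; omega)

lemma main_lt (m n : ℕ) (h : m < n) :
    ∫ x : ℝ, (raiseOp^[m] gauss x) * (raiseOp^[n] gauss x) = 0 := by
  rw [iterate_raiseOp_eq, iterate_raiseOp_eq]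
  have heq : (fun x : ℝ => ((hpoly m).eval x * gauss x) * ((hpoly n).eval x * gauss x))
      = fun x : ℝ => (hpoly m).eval x * (hpoly n).eval x * Real.exp (-x ^ 2) := by
    funext x
    have : gauss x * gauss x = Real.exp (-x ^ 2) := by
      rw [gauss, ← Real.exp_add]; ring_nf
    rw [mul_mul_mul_comm, this]
  calc ∫ x : ℝ, ((hpoly m).eval x * gauss x) * ((hpoly n).eval x * gauss x)
      = ∫ x : ℝ, (hpoly m).eval x * (hpoly n).eval x * Real.exp (-x ^ 2) := by rw [heq]
    _ = 0 := ortho_aux n (hpoly m) (lt_of_le_of_lt (hpoly_natDegree m) h)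

/-- The functions `fₙ = Rⁿ f₀` are pairwise orthogonal in `L²(ℝ)`:
for `m ≠ n`, `∫ fₘ(x) · fₙ(x) dx = 0`. -/
theorem iterate_raiseOp_gauss_orthogonal (m n : ℕ) (hmn : m ≠ n) :
    ∫ x : ℝ, (raiseOp^[m] gauss x) * (raiseOp^[n] gauss x) = 0 := by
  rcases hmn.lt_or_gt with h | h
  · exact main_lt m n h
  · have := main_lt n m h
    calc ∫ x : ℝ, (raiseOp^[m] gauss x) * (raiseOp^[n] gauss x)
        = ∫ x : ℝ, (raiseOp^[n] gauss x) * (raiseOp^[m] gauss x) := by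
          congr 1; funext x; ring
      _ = 0 := this
end
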